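/- Let (p_N)_{N≥1} be a sequence in (1/2, 1) and p_∞ ∈ (1/2, 1) such that sup_N N·|p_N − p_∞| < ∞. Then the probability of a wrong majority decision satisfies P[ Binom(2N+1, p_N) ≤ N ] = Θ( (4 p_∞ (1 − p_∞))^N / √N ): there exist constants 0 < a ≤ b and an integer N₀ such that for all N ≥ N₀, a·(4 p_∞(1−p_∞))^N / √N ≤ P[ Binom(2N+1, p_N) ≤ N ] ≤ b·(4 p_∞(1−p_∞))^N / √N. -/

import Mathlib

open Finset

private lemma cb_succ (n : ℕ) : ((n:ℝ)+1) * (Nat.centralBinom (n+1) : ℝ)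
    = 2*(2*(n:ℝ)+1) * (Nat.centralBinom n : ℝ) := by
  have h := Nat.succ_mul_centralBinom_succ n
  have := congrArg (Nat.cast : ℕ → ℝ) h
  push_cast at this
  linarith

private lemma cb_sq_le (n : ℕ) : (2*(n:ℝ)+1) * (Nat.centralBinom n : ℝ)^2 ≤ 16^n := by
  induction n with
  | zero => simp [Nat.centralBinom]
  | succ n ih =>
    set c : ℝ := (Nat.centralBinom n : ℝ) with hc
    set c' : ℝ := (Nat.centralBinom (n+1) : ℝ) with hc'
    have h := cb_succ n
    have hpos : (0:ℝ) < ((n:ℝ)+1)^2 := by positivity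
    have h16 : (0:ℝ) ≤ (16:ℝ)^n := by positivity
    have h2 : (((n:ℝ)+1) * c')^2 = (2*(2*(n:ℝ)+1) * c)^2 := by rw [h]
    have key : ((n:ℝ)+1)^2 * ((2*((n:ℝ)+1)+1) * c'^2) ≤ ((n:ℝ)+1)^2 * 16^(n+1) := by
      calc ((n:ℝ)+1)^2 * ((2*((n:ℝ)+1)+1) * c'^2)
          = (2*(n:ℝ)+3) * ((((n:ℝ)+1)*c')^2) := by ring
        _ = (2*(n:ℝ)+3) * ((2*(2*(n:ℝ)+1)*c)^2) := by rw [h2]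
        _ = ((2*(n:ℝ)+3)*(4*(2*(n:ℝ)+1))) * ((2*(n:ℝ)+1)*c^2) := by ring
        _ ≤ ((2*(n:ℝ)+3)*(4*(2*(n:ℝ)+1))) * 16^n :=
            mul_le_mul_of_nonneg_left ih (by positivity)
        _ ≤ (16*((n:ℝ)+1)^2) * 16^n :=
            mul_le_mul_of_nonneg_right (by nlinarith) h16
        _ = ((n:ℝ)+1)^2 * 16^(n+1) := by ring
    have := le_of_mul_le_mul_left key hpos
    push_cast
    linarith

private lemma le_cb_sq (n : ℕ) (hn : 1 ≤ n) : (16:ℝ)^n ≤ 4*(n:ℝ) * (Nat.centralBinom n : ℝ)^2 := by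
  induction n with
  | zero => omega
  | succ n ih =>
    rcases Nat.eq_or_lt_of_le hn with h1 | h1
    · have : n = 0 := by omega
      subst this
      norm_num [Nat.centralBinom]
    · have hn' : 1 ≤ n := by omega
      have ih := ih hn'
      set c : ℝ := (Nat.centralBinom n : ℝ) with hc
      set c' : ℝ := (Nat.centralBinom (n+1) : ℝ) with hc'
      have h := cb_succ n
      have hpos : (0:ℝ) < (n:ℝ)+1 := by positivity
      have h2 : (((n:ℝ)+1) * c')^2 = (2*(2*(n:ℝ)+1) * c)^2 := by rw [h]
      have key : ((n:ℝ)+1) * 16^(n+1) ≤ ((n:ℝ)+1) * (4*((n:ℝ)+1)*c'^2) := by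
        calc ((n:ℝ)+1) * 16^(n+1) = (16*((n:ℝ)+1)) * 16^n := by ring
          _ ≤ (16*((n:ℝ)+1)) * (4*(n:ℝ)*c^2) :=
              mul_le_mul_of_nonneg_left ih (by positivity)
          _ ≤ 4*((2*(2*(n:ℝ)+1)*c)^2) := by nlinarith [sq_nonneg c]
          _ = 4*((((n:ℝ)+1)*c')^2) := by rw [h2]
          _ = ((n:ℝ)+1) * (4*((n:ℝ)+1)*c'^2) := by ring
      have := le_of_mul_le_mul_left key hpos
      push_cast
      linarith

private lemma cb_ge (n : ℕ) (hn : 1 ≤ n) :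
    (4:ℝ)^n / (2 * Real.sqrt n) ≤ (Nat.centralBinom n : ℝ) := by
  have hn0 : (0:ℝ) < (n:ℝ) := by exact_mod_cast hn
  have hs : (0:ℝ) < Real.sqrt n := Real.sqrt_pos.mpr hn0
  rw [div_le_iff₀ (by positivity)]
  have hsq : ((4:ℝ)^n)^2 ≤ ((Nat.centralBinom n : ℝ) * (2*Real.sqrt n))^2 := by
    have h := le_cb_sq n hn
    have e : ((Nat.centralBinom n : ℝ) * (2*Real.sqrt n))^2
        = 4*(n:ℝ) * (Nat.centralBinom n : ℝ)^2 := by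
      rw [mul_pow, mul_pow, Real.sq_sqrt hn0.le]; ring
    rw [e]
    calc ((4:ℝ)^n)^2 = 16^n := by rw [← pow_mul, pow_mul']; norm_num
    _ ≤ _ := h
  exact (pow_le_pow_iff_left₀ (by positivity) (by positivity) two_ne_zero).mp hsq

private lemma cb_le (n : ℕ) (hn : 1 ≤ n) :
    (Nat.centralBinom n : ℝ) ≤ (4:ℝ)^n / Real.sqrt n := by
  have hn0 : (0:ℝ) < (n:ℝ) := by exact_mod_cast hn
  have hs : (0:ℝ) < Real.sqrt n := Real.sqrt_pos.mpr hn0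
  rw [le_div_iff₀ hs]
  have hsq : ((Nat.centralBinom n : ℝ) * Real.sqrt n)^2 ≤ ((4:ℝ)^n)^2 := by
    have h := cb_sq_le n
    have e : ((Nat.centralBinom n : ℝ) * Real.sqrt n)^2 = (n:ℝ) * (Nat.centralBinom n : ℝ)^2 := by
      rw [mul_pow, Real.sq_sqrt hn0.le]; ring
    rw [e]
    calc (n:ℝ) * (Nat.centralBinom n : ℝ)^2 ≤ (2*(n:ℝ)+1) * (Nat.centralBinom n : ℝ)^2 := by
          nlinarith [sq_nonneg (Nat.centralBinom n : ℝ), hn0]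
    _ ≤ 16^n := h
    _ = ((4:ℝ)^n)^2 := by rw [← pow_mul, pow_mul']; norm_num
  exact (pow_le_pow_iff_left₀ (by positivity) (by positivity) two_ne_zero).mp hsq

private lemma choose_eq_cb (N : ℕ) : ((N:ℝ)+1) * (Nat.choose (2*N+1) N : ℝ)
    = (2*(N:ℝ)+1) * (Nat.centralBinom N : ℝ) := by
  have h := Nat.add_one_mul_choose_eq (2*N) N
  have hsymm : Nat.choose (2*N+1) N = Nat.choose (2*N+1) (N+1) := by
    have := Nat.choose_symm (n := 2*N+1) (k := N+1) (by omega)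
    simpa [show 2*N+1-(N+1) = N by omega] using this
  rw [Nat.centralBinom]
  have h' : (2*N+1) * Nat.choose (2*N) N = Nat.choose (2*N+1) N * (N+1) := by
    rw [hsymm]; simpa [Nat.succ_eq_add_one] using h
  have := congrArg (Nat.cast : ℕ → ℝ) h'
  push_cast at this
  linarith

private lemma exp_le_one_sub_half (x : ℝ) (h0 : 0 ≤ x) (h1 : x ≤ 1/2) :
    Real.exp (-(2*x)) ≤ 1 - x := by
  have h := Real.add_one_le_exp (2*x)
  have hp : (0:ℝ) < 1 + 2*x := by linarith
  rw [Real.exp_neg]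
  have h2 : (Real.exp (2*x))⁻¹ ≤ (1+2*x)⁻¹ := by
    apply inv_anti₀ hp
    linarith
  refine h2.trans ?_
  rw [inv_eq_one_div, div_le_iff₀ hp]
  nlinarith

/-- `P[Binom(2N+1, p) ≤ N]`: the probability of a wrong majority decision when each of the
`2N+1` votes is correct with probability `p`. -/
noncomputable def lowTail (N : ℕ) (p : ℝ) : ℝ :=
  ∑ j ∈ Finset.range (N + 1),
    (Nat.choose (2 * N + 1) j : ℝ) * p ^ j * (1 - p) ^ (2 * N + 1 - j)

private lemma lowTail_bounds (N : ℕ) (q : ℝ) (hq1 : 1/2 < q) (hq2 : q < 1) :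
    (Nat.choose (2*N+1) N : ℝ) * q^N * (1-q)^(N+1) ≤ lowTail N q ∧
    lowTail N q ≤ (Nat.choose (2*N+1) N : ℝ) * q^N * (1-q)^(N+1) * (q/(2*q-1)) := by
  have hq0 : 0 < q := by linarith
  have h1q : 0 < 1 - q := by linarith
  set t : ℕ → ℝ := fun j => (Nat.choose (2*N+1) j : ℝ) * q^j * (1-q)^(2*N+1-j) with ht
  have htnn : ∀ j, 0 ≤ t j := fun j => by positivity
  have hlt : lowTail N q = ∑ j ∈ Finset.range (N+1), t j := rfl
  have htN : t N = (Nat.choose (2*N+1) N : ℝ) * q^N * (1-q)^(N+1) := by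
    simp only [ht, show 2*N+1-N = N+1 by omega]
  constructor
  · rw [hlt, ← htN]
    exact Finset.single_le_sum (fun j _ => htnn j) (Finset.self_mem_range_succ N)
  · set r : ℝ := (1-q)/q with hr
    have hr0 : 0 ≤ r := by positivity
    have hr1 : r < 1 := by rw [hr, div_lt_one hq0]; linarith
    have hmono : ∀ j, j < N → t j ≤ r * t (j+1) := by
      intro j hj
      have hch : Nat.choose (2*N+1) j ≤ Nat.choose (2*N+1) (j+1) :=
        Nat.choose_le_succ_of_lt_half_left (by omega)
      have e1 : 2*N+1-j = (2*N+1-(j+1)) + 1 := by omega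
      have key : r * t (j+1) = (Nat.choose (2*N+1) (j+1) : ℝ) * q^j * (1-q)^(2*N+1-j) := by
        simp only [ht, e1, pow_succ, hr]
        field_simp
      rw [key]
      simp only [ht]
      gcongr
    have hiter : ∀ i, i ≤ N → t (N - i) ≤ r^i * t N := by
      intro i
      induction i with
      | zero => intro _; simp
      | succ i ih =>
        intro h
        have hi := ih (by omega)
        have h1 : N - (i+1) < N := by omega
        have h2 := hmono (N-(i+1)) h1
        rw [show N-(i+1)+1 = N-i by omega] at h2
        calc t (N-(i+1)) ≤ r * t (N-i) := h2
          _ ≤ r * (r^i * t N) := mul_le_mul_of_nonneg_left hi hr0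
          _ = r^(i+1) * t N := by ring
    have hrefl : ∑ j ∈ Finset.range (N+1), t j = ∑ i ∈ Finset.range (N+1), t (N - i) := by
      have := Finset.sum_range_reflect t (N+1)
      simp only [Nat.add_sub_cancel] at this
      exact this.symm
    have hgeom : ∑ i ∈ Finset.range (N+1), r^i ≤ 1/(1-r) := by
      rw [le_div_iff₀ (by linarith)]
      have := geom_sum_mul r (N+1)
      have hpow : (0:ℝ) ≤ r^(N+1) := by positivity
      nlinarith [this]
    have hsum : ∑ i ∈ Finset.range (N+1), t (N-i) ≤ (1/(1-r)) * t N := by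
      calc ∑ i ∈ Finset.range (N+1), t (N-i)
          ≤ ∑ i ∈ Finset.range (N+1), r^i * t N :=
            Finset.sum_le_sum (fun i hi => hiter i (by simpa using Finset.mem_range_succ_iff.mp hi))
        _ = (∑ i ∈ Finset.range (N+1), r^i) * t N := by rw [Finset.sum_mul]
        _ ≤ (1/(1-r)) * t N := mul_le_mul_of_nonneg_right hgeom (htnn N)
    have hfr : 1/(1-r) = q/(2*q-1) := by
      rw [hr]
      field_simp
      ring
    rw [hlt, hrefl, ← htN]
    calc ∑ i ∈ Finset.range (N+1), t (N-i) ≤ (1/(1-r)) * t N := hsum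
      _ = t N * (q/(2*q-1)) := by rw [hfr]; ring

set_option maxHeartbeats 1600000 in
/-- **Proposition 3** (rate of convergence of welfare): if `p_N ∈ (1/2,1)` with
`sup_N N·|p_N − p_∞| < ∞` and `p_∞ ∈ (1/2,1)`, then
`P[Binom(2N+1, p_N) ≤ N] = Θ((4 p_∞ (1−p_∞))^N / √N)`. -/
theorem wrong_majority_rate (p : ℕ → ℝ) (pinf : ℝ)
    (hpinf : pinf ∈ Set.Ioo (1 / 2 : ℝ) 1)
    (hp : ∀ N : ℕ, 1 ≤ N → p N ∈ Set.Ioo (1 / 2 : ℝ) 1)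
    (hrate : ∃ C : ℝ, ∀ N : ℕ, 1 ≤ N → (N : ℝ) * |p N - pinf| ≤ C) :
    ∃ a b : ℝ, ∃ N₀ : ℕ, 0 < a ∧ a ≤ b ∧ ∀ N : ℕ, N₀ ≤ N →
      a * (4 * pinf * (1 - pinf)) ^ N / Real.sqrt N ≤ lowTail N (p N) ∧
      lowTail N (p N) ≤ b * (4 * pinf * (1 - pinf)) ^ N / Real.sqrt N := by
  obtain ⟨hpi1, hpi2⟩ := hpinf
  obtain ⟨C0, hC0⟩ := hrate
  set C : ℝ := max C0 0 with hCdef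
  have hC : ∀ N : ℕ, 1 ≤ N → (N:ℝ) * |p N - pinf| ≤ C :=
    fun N hN => (hC0 N hN).trans (le_max_left _ _)
  have hCnn : 0 ≤ C := le_max_right _ _
  set Q : ℝ := 4 * pinf * (1 - pinf) with hQdef
  have hQ0 : 0 < Q := by
    rw [hQdef]
    have h1 : (0:ℝ) < pinf := by linarith
    have h2 : (0:ℝ) < 1 - pinf := by linarith
    positivity
  set δ : ℝ := pinf - 1/2 with hδdef
  have hδ0 : 0 < δ := by rw [hδdef]; linarith
  set ε : ℝ := min (δ/2) ((1-pinf)/2) with hεdef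
  have hε0 : 0 < ε := lt_min (by positivity) (by linarith)
  set M : ℝ := max (max (C/ε) (8*C/Q)) 1 with hMdef
  set aa : ℝ := Real.exp (-(8*C/Q)) * (1-pinf) / 4 with haa
  set bb : ℝ := max (2*Real.exp (4*C/Q)/δ) aa with hbb
  clear_value C Q δ ε M aa bb
  have haa0 : 0 < aa := by
    have h := Real.exp_pos (-(8*C/Q))
    rw [haa]
    have h2 : (0:ℝ) < 1 - pinf := by linarith
    positivity
  refine ⟨aa, bb, ⌈M⌉₊, haa0, by rw [hbb]; exact le_max_right _ _, ?_⟩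
  intro N hN
  have hMN : M ≤ (N:ℝ) := le_trans (Nat.le_ceil M) (by exact_mod_cast hN)
  have hM1 : (1:ℝ) ≤ M := by rw [hMdef]; exact le_max_right _ _
  have hMa : C/ε ≤ M := by rw [hMdef]; exact le_trans (le_max_left _ _) (le_max_left _ _)
  have hMb : 8*C/Q ≤ M := by rw [hMdef]; exact le_trans (le_max_right _ _) (le_max_left _ _)
  have hN1R : (1:ℝ) ≤ (N:ℝ) := le_trans hM1 hMN
  have hN1 : 1 ≤ N := by exact_mod_cast hN1R
  have hNpos : (0:ℝ) < (N:ℝ) := by linarith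
  obtain ⟨hq1, hq2⟩ := hp N hN1
  set q : ℝ := p N with hqdef
  have hspos : 0 < Real.sqrt N := Real.sqrt_pos.mpr hNpos
  set s : ℝ := Real.sqrt N with hsdef
  -- |q - pinf| small
  have habs : |q - pinf| ≤ C / N := by
    rw [le_div_iff₀ hNpos]
    have := hC N hN1
    linarith [this]
  have hCN : C / N ≤ ε := by
    have h1 : C/ε ≤ (N:ℝ) := le_trans hMa hMN
    rw [div_le_iff₀ hNpos]
    have h2 := (div_le_iff₀ hε0).mp h1
    linarith
  have habs' := abs_le.mp (habs.trans hCN)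
  have hεδ : ε ≤ δ/2 := by rw [hεdef]; exact min_le_left _ _
  have hεp : ε ≤ (1-pinf)/2 := by rw [hεdef]; exact min_le_right _ _
  have h2q : δ ≤ 2*q - 1 := by
    have := habs'.1
    rw [hδdef]
    linarith
  have h1qlow : (1-pinf)/2 ≤ 1 - q := by linarith [habs'.2]
  have hq21 : 0 < 2*q - 1 := by linarith
  have hqnn : (0:ℝ) ≤ q := by linarith
  have h1qnn : (0:ℝ) ≤ 1 - q := by linarith
  -- f = 4q(1-q) close to Q
  set f : ℝ := 4*q*(1-q) with hfdef
  have hf0 : 0 < f := by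
    rw [hfdef]
    have h1 : (0:ℝ) < q := by linarith
    have h2 : (0:ℝ) < 1 - q := by linarith
    positivity
  have hfQ : |f - Q| ≤ 4*(C/N) := by
    have e : f - Q = 4*(q - pinf)*(1 - q - pinf) := by rw [hfdef, hQdef]; ring
    rw [e]
    have hb : |1 - q - pinf| ≤ 1 := by
      rw [abs_le]
      exact ⟨by linarith, by linarith⟩
    calc |4*(q-pinf)*(1-q-pinf)| = (4*|q-pinf|) * |1-q-pinf| := by
          rw [abs_mul, abs_mul]; norm_num
      _ ≤ (4*(C/N)) * 1 := by
          apply mul_le_mul (by linarith [habs, hC N hN1, abs_nonneg (q-pinf)]) hb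
            (abs_nonneg _) (by positivity)
      _ = 4*(C/N) := by ring
  have hfabs := abs_le.mp hfQ
  -- x = 4C/(QN)
  set x : ℝ := 4*C/(Q*N) with hxdef
  have hx0 : 0 ≤ x := by positivity
  have hx2 : x ≤ 1/2 := by
    have h8 : 8*C/Q ≤ (N:ℝ) := le_trans hMb hMN
    have h9 := (div_le_iff₀ hQ0).mp h8
    rw [hxdef, div_le_iff₀ (by positivity)]
    linarith
  have hxN : x * N = 4*C/Q := by rw [hxdef]; field_simp
  -- bounds on f^N
  have hflow : Q * Real.exp (-(2*x)) ≤ f := by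
    have hexp := exp_le_one_sub_half x hx0 hx2
    have e : Q * (1-x) = Q - 4*C/(N:ℝ) := by rw [hxdef]; field_simp
    have h1 : Q * (1-x) ≤ f := by
      rw [e]
      have := hfabs.1
      have e2 : 4*(C/(N:ℝ)) = 4*C/(N:ℝ) := by ring
      linarith [hfabs.1]
    calc Q * Real.exp (-(2*x)) ≤ Q * (1-x) := mul_le_mul_of_nonneg_left hexp hQ0.le
      _ ≤ f := h1
  have hfhigh : f ≤ Q * Real.exp x := by
    have hexp := Real.add_one_le_exp x
    have e : Q * (1+x) = Q + 4*C/(N:ℝ) := by rw [hxdef]; field_simp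
    have h1 : f ≤ Q * (1+x) := by
      rw [e]
      have e2 : 4*(C/(N:ℝ)) = 4*C/(N:ℝ) := by ring
      linarith [hfabs.2]
    exact h1.trans (mul_le_mul_of_nonneg_left (by linarith) hQ0.le)
  have hfpowlow : Q^N * Real.exp (-(8*C/Q)) ≤ f^N := by
    have h1 : (Q * Real.exp (-(2*x)))^N ≤ f^N :=
      pow_le_pow_left₀ (by positivity) hflow N
    have e : Q^N * Real.exp (-(8*C/Q)) = (Q * Real.exp (-(2*x)))^N := by
      rw [mul_pow, ← Real.exp_nat_mul]
      congr 1
      rw [show (N:ℝ) * (-(2*x)) = -(2*(x*N)) by ring, hxN]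
      ring
    rw [e]; exact h1
  have hfpowhigh : f^N ≤ Q^N * Real.exp (4*C/Q) := by
    have h1 : f^N ≤ (Q * Real.exp x)^N := pow_le_pow_left₀ hf0.le hfhigh N
    have e : (Q * Real.exp x)^N = Q^N * Real.exp (4*C/Q) := by
      rw [mul_pow, ← Real.exp_nat_mul]
      congr 1
      rw [show (N:ℝ) * x = x * N by ring, hxN]
    rw [← e]; exact h1
  -- choose bounds
  have hcb_choose := choose_eq_cb N
  have hcbnn : (0:ℝ) ≤ (Nat.centralBinom N : ℝ) := by positivity
  have hchlow : (Nat.centralBinom N : ℝ) ≤ (Nat.choose (2*N+1) N : ℝ) := by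
    have hp1 : (0:ℝ) < (N:ℝ)+1 := by positivity
    have : ((N:ℝ)+1) * (Nat.centralBinom N : ℝ) ≤ ((N:ℝ)+1) * (Nat.choose (2*N+1) N : ℝ) := by
      rw [hcb_choose]
      have := mul_le_mul_of_nonneg_right (show ((N:ℝ)+1) ≤ 2*(N:ℝ)+1 by linarith) hcbnn
      linarith
    exact le_of_mul_le_mul_left this hp1
  have hchhigh : (Nat.choose (2*N+1) N : ℝ) ≤ 2 * (Nat.centralBinom N : ℝ) := by
    have hp1 : (0:ℝ) < (N:ℝ)+1 := by positivity
    have : ((N:ℝ)+1) * (Nat.choose (2*N+1) N : ℝ) ≤ ((N:ℝ)+1) * (2*(Nat.centralBinom N : ℝ)) := by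
      rw [hcb_choose]
      have := mul_le_mul_of_nonneg_right (show (2*(N:ℝ)+1) ≤ 2*((N:ℝ)+1) by linarith) hcbnn
      linarith
    exact le_of_mul_le_mul_left this hp1
  have hcl : (4:ℝ)^N/(2*s) ≤ (Nat.choose (2*N+1) N : ℝ) :=
    le_trans (cb_ge N hN1) hchlow
  have hcu : (Nat.choose (2*N+1) N : ℝ) ≤ 2*((4:ℝ)^N/s) :=
    hchhigh.trans (by have := cb_le N hN1; linarith)
  have hLB := (lowTail_bounds N q hq1 hq2).1
  have hUB := (lowTail_bounds N q hq1 hq2).2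
  have hfn : (4:ℝ)^N * (q^N*(1-q)^N) = f^N := by
    rw [hfdef, mul_pow, mul_pow]; ring
  constructor
  · -- lower bound
    have L1 : (4:ℝ)^N/(2*s) * (q^N*(1-q)^(N+1)) ≤ lowTail N q := by
      calc (4:ℝ)^N/(2*s) * (q^N*(1-q)^(N+1))
          ≤ (Nat.choose (2*N+1) N : ℝ) * (q^N*(1-q)^(N+1)) :=
            mul_le_mul_of_nonneg_right hcl
              (mul_nonneg (pow_nonneg hqnn N) (pow_nonneg h1qnn (N+1)))
        _ = (Nat.choose (2*N+1) N : ℝ) * q^N * (1-q)^(N+1) := by ring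
        _ ≤ lowTail N q := hLB
    have L2 : (4:ℝ)^N/(2*s) * (q^N*(1-q)^(N+1)) = f^N * (1-q) / (2*s) := by
      rw [pow_succ, ← hfn]; ring
    have key : 2*(aa*Q^N) ≤ f^N*(1-q) := by
      have h1 : Q^N*Real.exp (-(8*C/Q)) * ((1-pinf)/2) ≤ f^N * (1-q) :=
        mul_le_mul hfpowlow h1qlow (by linarith) (pow_nonneg hf0.le N)
      calc 2*(aa*Q^N) = Q^N*Real.exp (-(8*C/Q)) * ((1-pinf)/2) := by rw [haa]; ring
        _ ≤ f^N*(1-q) := h1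
    calc aa * Q^N / s = (2*(aa*Q^N))/(2*s) := by ring
      _ ≤ (f^N*(1-q))/(2*s) :=
          (div_le_div_iff_of_pos_right (mul_pos two_pos hspos)).mpr key
      _ = (4:ℝ)^N/(2*s) * (q^N*(1-q)^(N+1)) := L2.symm
      _ ≤ lowTail N q := L1
  · -- upper bound
    have U1 : lowTail N q ≤ 2*((4:ℝ)^N/s) * (q^N*(1-q)^(N+1)*(q/(2*q-1))) := by
      calc lowTail N q ≤ (Nat.choose (2*N+1) N : ℝ) * q^N * (1-q)^(N+1) * (q/(2*q-1)) := hUB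
        _ = (Nat.choose (2*N+1) N : ℝ) * (q^N*(1-q)^(N+1)*(q/(2*q-1))) := by ring
        _ ≤ 2*((4:ℝ)^N/s) * (q^N*(1-q)^(N+1)*(q/(2*q-1))) :=
            mul_le_mul_of_nonneg_right hcu
              (mul_nonneg (mul_nonneg (pow_nonneg hqnn N) (pow_nonneg h1qnn (N+1)))
                (div_nonneg hqnn hq21.le))
    have U2 : 2*((4:ℝ)^N/s) * (q^N*(1-q)^(N+1)*(q/(2*q-1)))
        = (2/s) * (f^N * ((1-q)*q/(2*q-1))) := by
      rw [pow_succ, ← hfn]; ring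
    have hone : (1-q)*q ≤ 1 := by
      have h := mul_le_mul (show (1-q) ≤ 1 by linarith) (show q ≤ 1 by linarith) hqnn
        (by norm_num : (0:ℝ) ≤ 1)
      simpa using h
    have U3 : (1-q)*q/(2*q-1) ≤ 1/δ := div_le_div₀ zero_le_one hone hδ0 h2q
    have U4 : f^N * ((1-q)*q/(2*q-1)) ≤ (Q^N * Real.exp (4*C/Q)) * (1/δ) :=
      mul_le_mul hfpowhigh U3
        (div_nonneg (mul_nonneg h1qnn hqnn) hq21.le)
        (mul_nonneg (pow_nonneg hQ0.le N) (Real.exp_pos _).le)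
    have U5 : (2/s) * ((Q^N * Real.exp (4*C/Q)) * (1/δ)) = (2*Real.exp (4*C/Q)/δ) * Q^N / s := by
      ring
    calc lowTail N q ≤ (2/s) * (f^N * ((1-q)*q/(2*q-1))) := by rw [← U2]; exact U1
      _ ≤ (2/s) * ((Q^N * Real.exp (4*C/Q)) * (1/δ)) :=
          mul_le_mul_of_nonneg_left U4 (by positivity)
      _ = (2*Real.exp (4*C/Q)/δ) * Q^N / s := U5
      _ ≤ bb * Q^N / s := by
          have h1 : 2*Real.exp (4*C/Q)/δ ≤ bb := by rw [hbb]; exact le_max_left _ _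
          have h2 : (0:ℝ) ≤ Q^N / s := div_nonneg (pow_nonneg hQ0.le N) hspos.le
          have h3 := mul_le_mul_of_nonneg_right h1 h2
          calc (2*Real.exp (4*C/Q)/δ) * Q^N / s = (2*Real.exp (4*C/Q)/δ) * (Q^N / s) := by ring
            _ ≤ bb * (Q^N / s) := h3
            _ = bb * Q^N / s := by ring
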